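/- Let V ∈ ℝ^{k×n}, let S ∈ ℝ^{n×n} be a nonzero symmetric positive semidefinite matrix with smallest nonzero eigenvalue λ⁺(S), and let R ∈ ℝ^{n×n} with smallest singular value σ_min(R). Then ‖V S R‖_F² ≥ σ_min(R)² · λ⁺(S) · trace(V S Vᵀ). -/

import Mathlib

open Matrix
open scoped BigOperators

/-- Lower bound `‖V S R‖_F² ≥ σ_min(R)² · λ⁺(S) · trace(V S Vᵀ)` for a nonzero PSD
matrix `S` with smallest nonzero eigenvalue `lam` and a matrix `R` whose smallest
singular value is `σmin` (characterized as the greatest `c ≥ 0` with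
`c² (xᵀx) ≤ ‖xᵀR‖²` for all `x`). -/
theorem frobenius_lower_bound_VSR {k n : ℕ} (V : Matrix (Fin k) (Fin n) ℝ)
    (S : Matrix (Fin n) (Fin n) ℝ) (hS : S.PosSemidef) (hS0 : S ≠ 0)
    (lam : ℝ) (hlam : IsLeast {μ : ℝ | μ ≠ 0 ∧ μ ∈ spectrum ℝ S} lam)
    (R : Matrix (Fin n) (Fin n) ℝ) (σmin : ℝ)
    (hσ : IsGreatest {c : ℝ | 0 ≤ c ∧ ∀ x : Fin n → ℝ,
        c ^ 2 * (x ⬝ᵥ x) ≤ (Matrix.vecMul x R) ⬝ᵥ (Matrix.vecMul x R)} σmin) :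
    ∑ p, ∑ q, ((V * S * R) p q) ^ 2 ≥ σmin ^ 2 * lam * Matrix.trace (V * S * Vᵀ) := by
  classical
  have hH : S.IsHermitian := hS.1
  -- `lam` is an eigenvalue, hence it is some `eigenvalues i₀`, hence `lam > 0`
  have hspec : spectrum ℝ S = Set.range hH.eigenvalues :=
    Matrix.IsHermitian.spectrum_real_eq_range_eigenvalues hH
  have hlam_pos : 0 < lam := by
    obtain ⟨hne, hmem⟩ := hlam.1
    rw [hspec] at hmem
    obtain ⟨i, hi⟩ := hmem
    have := hS.eigenvalues_nonneg i
    rw [hi] at this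
    exact lt_of_le_of_ne this (Ne.symm hne)
  -- each eigenvalue is either 0 or ≥ lam
  have heig : ∀ i, hH.eigenvalues i = 0 ∨ lam ≤ hH.eigenvalues i := by
    intro i
    by_cases h : hH.eigenvalues i = 0
    · exact Or.inl h
    · exact Or.inr (hlam.2 ⟨h, hH.eigenvalues_mem_spectrum_real i⟩)
  -- `S*S - lam • S` is PSD
  set U : Matrix (Fin n) (Fin n) ℝ := (hH.eigenvectorUnitary : Matrix (Fin n) (Fin n) ℝ)
  have hU : U * star U = 1 := (Matrix.mem_unitaryGroup_iff).mp hH.eigenvectorUnitary.2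
  have hUU : star U * U = 1 := (Matrix.mem_unitaryGroup_iff').mp hH.eigenvectorUnitary.2
  have hSpec : S = U * Matrix.diagonal hH.eigenvalues * star U := by
    have := hH.spectral_theorem
    simpa using this
  have hM : (S * S - lam • S).PosSemidef := by
    have hdiag : S * S - lam • S =
        U * Matrix.diagonal (fun i => hH.eigenvalues i ^ 2 - lam * hH.eigenvalues i) * star U := by
      conv_lhs => rw [hSpec]
      have h1 : (U * Matrix.diagonal hH.eigenvalues * star U) *
          (U * Matrix.diagonal hH.eigenvalues * star U)
          = U * (Matrix.diagonal hH.eigenvalues * Matrix.diagonal hH.eigenvalues) * star U := by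
        rw [mul_assoc (U * Matrix.diagonal hH.eigenvalues) (star U) _]
        rw [show star U * (U * Matrix.diagonal hH.eigenvalues * star U)
            = (star U * U) * Matrix.diagonal hH.eigenvalues * star U by
          simp [mul_assoc]]
        rw [hUU, one_mul]
        simp only [mul_assoc]
      rw [h1, Matrix.diagonal_mul_diagonal]
      rw [show lam • (U * Matrix.diagonal hH.eigenvalues * star U)
          = U * (lam • Matrix.diagonal hH.eigenvalues) * star U by
        simp [Matrix.mul_smul, Matrix.smul_mul]]
      rw [← Matrix.sub_mul, ← Matrix.mul_sub]
      congr 2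
      ext i j
      rcases eq_or_ne i j with rfl | h
      · simp only [Matrix.sub_apply, Matrix.smul_apply, Matrix.diagonal_apply_eq, smul_eq_mul]
        ring
      · simp [Matrix.diagonal_apply_ne _ h]
    rw [hdiag]
    apply Matrix.PosSemidef.mul_mul_conjTranspose_same
    refine Matrix.posSemidef_diagonal_iff.mpr fun i => ?_
    rcases heig i with h | h
    · simp [h]
    · have h0 : 0 ≤ hH.eigenvalues i := le_trans hlam_pos.le h
      nlinarith
  -- trace(V * M * Vᵀ) ≥ 0 for PSD M
  have htraceM : 0 ≤ Matrix.trace (V * (S * S - lam • S) * Vᵀ) := by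
    rw [Matrix.trace]
    apply Finset.sum_nonneg
    intro p _
    have hx := hM.dotProduct_mulVec_nonneg (V p)
    have : (V * (S * S - lam • S) * Vᵀ) p p
        = star (V p) ⬝ᵥ ((S * S - lam • S) *ᵥ (V p)) := by
      simp only [Matrix.mul_apply, Matrix.transpose_apply, dotProduct,
        Matrix.mulVec, dotProduct, star_trivial, Pi.star_apply, star_trivial]
      simp_rw [Finset.sum_mul, Finset.mul_sum]
      rw [Finset.sum_comm]
      exact Finset.sum_congr rfl fun q _ => Finset.sum_congr rfl fun r _ => by ring
    rw [Matrix.diag_apply, this]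
    exact hx
  -- trace(V * S * S * Vᵀ) ≥ lam * trace(V * S * Vᵀ)
  have htrace2 : lam * Matrix.trace (V * S * Vᵀ) ≤ Matrix.trace (V * (S * S) * Vᵀ) := by
    have hsplit : V * (S * S - lam • S) * Vᵀ
        = V * (S * S) * Vᵀ - lam • (V * S * Vᵀ) := by
      rw [Matrix.mul_sub, Matrix.sub_mul]
      congr 1
      simp [Matrix.mul_smul, Matrix.smul_mul]
    rw [hsplit, Matrix.trace_sub, Matrix.trace_smul] at htraceM
    simp only [smul_eq_mul] at htraceM
    linarith
  -- Frobenius part: per-row bound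
  have hrow : ∀ p, σmin ^ 2 * ∑ q, ((V * S) p q) ^ 2 ≤ ∑ q, ((V * S * R) p q) ^ 2 := by
    intro p
    have hb := hσ.1.2 ((V * S) p)
    have h1 : ((V * S) p) ⬝ᵥ ((V * S) p) = ∑ q, ((V * S) p q) ^ 2 := by
      simp [dotProduct, sq]
    have h2 : (Matrix.vecMul ((V * S) p) R) ⬝ᵥ (Matrix.vecMul ((V * S) p) R)
        = ∑ q, ((V * S * R) p q) ^ 2 := by
      simp only [dotProduct, Matrix.vecMul, Matrix.mul_apply, dotProduct, sq]
    rw [h1, h2] at hb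
    exact hb
  have hsum : σmin ^ 2 * ∑ p, ∑ q, ((V * S) p q) ^ 2 ≤ ∑ p, ∑ q, ((V * S * R) p q) ^ 2 := by
    rw [Finset.mul_sum]
    exact Finset.sum_le_sum fun p _ => hrow p
  -- identify ∑∑ ((V*S) p q)^2 with trace (V * (S*S) * Vᵀ)
  have hfro : ∑ p, ∑ q, ((V * S) p q) ^ 2 = Matrix.trace (V * (S * S) * Vᵀ) := by
    have hSt : Sᵀ = S := hH
    have : V * (S * S) * Vᵀ = (V * S) * (V * S)ᵀ := by
      rw [Matrix.transpose_mul, hSt]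
      simp only [Matrix.mul_assoc]
    rw [this, Matrix.trace]
    simp only [Matrix.diag_apply, Matrix.mul_apply, Matrix.transpose_apply, sq]
  have hσ0 : 0 ≤ σmin ^ 2 := sq_nonneg _
  calc σmin ^ 2 * lam * Matrix.trace (V * S * Vᵀ)
      = σmin ^ 2 * (lam * Matrix.trace (V * S * Vᵀ)) := by ring
    _ ≤ σmin ^ 2 * Matrix.trace (V * (S * S) * Vᵀ) := by
        exact mul_le_mul_of_nonneg_left htrace2 hσ0
    _ = σmin ^ 2 * ∑ p, ∑ q, ((V * S) p q) ^ 2 := by rw [hfro]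
    _ ≤ ∑ p, ∑ q, ((V * S * R) p q) ^ 2 := hsum
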